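/- Let π be a probability measure on {-1,+1}ⁿ satisfying the FKG inequality (π(fg) ≥ π(f)π(g) for all increasing f, g). If f is strictly increasing with π(f) = 0, and g is increasing with π(g) = 0 and π(fg) = 0, then g = 0 π-almost surely (i.e., π(g²) = 0). -/
import Mathlib


/-- Configurations of the Ising model on `n` sites: spins taking values in
`{-1, +1} ⊆ ℝ`, with the coordinatewise partial order. -/
abbrev Spins (n : ℕ) : Type := Fin n → ({-1, 1} : Finset ℝ)

theorem stmt_15 (n : ℕ) (π : Spins n → ℝ)
    (hπ0 : ∀ σ, 0 ≤ π σ) (hπ1 : ∑ σ : Spins n, π σ = 1)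
    (hFKG : ∀ f g : Spins n → ℝ, Monotone f → Monotone g →
      (∑ σ, π σ * f σ) * (∑ σ, π σ * g σ) ≤ ∑ σ, π σ * (f σ * g σ))
    (f g : Spins n → ℝ)
    (hf : StrictMono f) (hfm : ∑ σ, π σ * f σ = 0)
    (hg : Monotone g) (hgm : ∑ σ, π σ * g σ = 0)
    (hfg : ∑ σ, π σ * (f σ * g σ) = 0) :
    ∑ σ, π σ * (g σ) ^ 2 = 0 := by
  classical
  set P : Finset (Spins n × Spins n) := Finset.univ.filter (fun p => p.1 < p.2) with hP
  set v : Spins n × Spins n → ℝ := fun p => (f p.2 - f p.1) / (g p.2 - g p.1 + 1) with hv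
  have hvpos : ∀ p ∈ P, 0 < v p := by
    intro p hp
    have hlt : p.1 < p.2 := (Finset.mem_filter.mp hp).2
    have hnum : 0 < f p.2 - f p.1 := sub_pos.mpr (hf hlt)
    have hden : 0 < g p.2 - g p.1 + 1 := by
      have := sub_nonneg.mpr (hg hlt.le); linarith
    exact div_pos hnum hden
  set α : ℝ := if h : P.Nonempty then P.inf' h v else 1 with hα
  have hαpos : 0 < α := by
    by_cases h : P.Nonempty
    · rw [hα, dif_pos h]
      obtain ⟨p, hp, hpe⟩ := Finset.exists_mem_eq_inf' h v
      rw [hpe]; exact hvpos p hp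
    · rw [hα, dif_neg h]; norm_num
  have hαle : ∀ p ∈ P, α ≤ v p := by
    intro p hp
    have h : P.Nonempty := ⟨p, hp⟩
    rw [hα, dif_pos h]
    exact Finset.inf'_le v hp
  have hmono : Monotone (fun σ => f σ - α * g σ) := by
    intro σ τ hle
    rcases eq_or_lt_of_le hle with rfl | hlt
    · exact le_rfl
    · have hp : (σ, τ) ∈ P := by simp [hP, hlt]
      have h1 : α ≤ (f τ - f σ) / (g τ - g σ + 1) := hαle (σ, τ) hp
      have hden : 0 < g τ - g σ + 1 := by
        have := sub_nonneg.mpr (hg hle); linarith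
      have h2 : α * (g τ - g σ + 1) ≤ f τ - f σ := by
        rw [← le_div_iff₀ hden]; exact h1
      have h3 : α * (g τ - g σ) ≤ f τ - f σ := by nlinarith
      simp only
      linarith [mul_sub α (g τ) (g σ)]
  have key := hFKG (fun σ => f σ - α * g σ) g hmono hg
  have e1 : ∑ σ, π σ * ((f σ - α * g σ) * g σ)
      = (∑ σ, π σ * (f σ * g σ)) - α * ∑ σ, π σ * (g σ) ^ 2 := by
    rw [Finset.mul_sum, ← Finset.sum_sub_distrib]
    apply Finset.sum_congr rfl
    intro σ _; ring
  have e2 : ∑ σ, π σ * (f σ - α * g σ)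
      = (∑ σ, π σ * f σ) - α * ∑ σ, π σ * g σ := by
    rw [Finset.mul_sum, ← Finset.sum_sub_distrib]
    apply Finset.sum_congr rfl
    intro σ _; ring
  rw [e1, hfg, e2, hfm, hgm] at key
  have hle0 : ∑ σ, π σ * (g σ) ^ 2 ≤ 0 := by nlinarith
  have hge0 : 0 ≤ ∑ σ, π σ * (g σ) ^ 2 :=
    Finset.sum_nonneg fun σ _ => mul_nonneg (hπ0 σ) (sq_nonneg _)
  linarith
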